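/- In a modular lattice where every element has finite height, if a is a join-irreducible element admissible with respect to X (a ≰ X and every join-irreducible a' < a satisfies a' ≤ X), then h(X ∨ a) = h(X) + 1, where h is the height function. -/

import Mathlib

/-- An element `a` of a lattice with bottom is join-irreducible if `a ≠ ⊥` and
`a = X ⊔ Y` implies `a = X` or `a = Y`. -/
def JoinIrred {α : Type*} [Lattice α] [OrderBot α] (a : α) : Prop :=
  a ≠ ⊥ ∧ ∀ X Y : α, a = X ⊔ Y → a = X ∨ a = Y

/-- Every element dominated on all its join-irreducible lower bounds is dominated. -/
lemma le_of_forall_joinIrred_le {α : Type*} [Lattice α] [OrderBot α]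
    (hfin : ∀ x : α, Order.height x ≠ ⊤) :
    ∀ n : ℕ, ∀ y X : α, Order.height y ≤ n →
      (∀ a' : α, JoinIrred a' → a' ≤ y → a' ≤ X) → y ≤ X := by
  intro n
  induction n with
  | zero =>
    intro y X hy _
    have : Order.height y = 0 := le_antisymm (by simpa using hy) (zero_le)
    have hmin : IsMin y := Order.height_eq_zero.mp this
    have : y = ⊥ := le_antisymm (hmin bot_le) bot_le
    simp [this]
  | succ n ih =>
    intro y X hy hJ
    by_cases hybot : y = ⊥
    · simp [hybot]
    by_cases hyirr : JoinIrred y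
    · exact hJ y hyirr le_rfl
    · rw [JoinIrred, not_and] at hyirr
      push_neg at hyirr
      obtain ⟨u, v, huv, hu, hv⟩ := hyirr hybot
      have hult : u < y := lt_of_le_of_ne (by rw [huv]; exact le_sup_left) (Ne.symm hu)
      have hvlt : v < y := lt_of_le_of_ne (by rw [huv]; exact le_sup_right) (Ne.symm hv)
      have key : ∀ w : α, w < y → w ≤ X := by
        intro w hw
        have hfinw : Order.height w < ⊤ := lt_top_iff_ne_top.mpr (hfin w)
        have hlt : Order.height w < Order.height y := Order.height_strictMono hw hfinw
        have hwn : Order.height w ≤ n := by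
          have h := lt_of_lt_of_le hlt hy
          push_cast at h
          exact (ENat.lt_add_one_iff (ENat.coe_ne_top n)).mp h
        exact ih w X hwn fun a' ha' hle => hJ a' ha' (hle.trans hw.le)
      calc y = u ⊔ v := huv
        _ ≤ X := sup_le (key u hult) (key v hvlt)

/-- In a modular lattice with finite heights, a covering raises height by at most one. -/
lemma height_le_of_covBy {α : Type*} [Lattice α] [IsModularLattice α]
    (hfin : ∀ x : α, Order.height x ≠ ⊤) :
    ∀ n : ℕ, ∀ X Y : α, X ⋖ Y → Order.height Y ≤ n →
      Order.height Y ≤ Order.height X + 1 := by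
  intro n
  induction n with
  | zero =>
    intro X Y hc hY
    have : Order.height Y = 0 := le_antisymm (by simpa using hY) (zero_le)
    exact absurd hc.lt (Order.height_eq_zero.mp this : IsMin Y).not_lt
  | succ n ih =>
    intro X Y hc hY
    apply Order.height_le
    intro p hp
    rcases Nat.eq_zero_or_pos p.length with h0 | hpos
    · simp [h0]
    set z := p.eraseLast.last with hz
    have hzY : z < Y := hp ▸ p.eraseLast_last_rel_last hpos.ne'
    have hlen : ((p.length - 1 : ℕ) : ℕ∞) ≤ Order.height z := by
      have := Order.length_le_height_last (p := p.eraseLast)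
      simpa [hz] using this
    have harith : ∀ m : ℕ∞, Order.height z ≤ m → (p.length : ℕ∞) ≤ m + 1 := by
      intro m hm
      have h1 : ((p.length - 1 : ℕ) : ℕ∞) ≤ m := hlen.trans hm
      have : (p.length : ℕ∞) = ((p.length - 1 : ℕ) : ℕ∞) + 1 := by
        norm_cast; omega
      rw [this]
      exact add_le_add_left h1 1
    by_cases hzX : z ≤ X
    · exact harith _ (Order.height_mono hzX)
    · -- z ≰ X; then X ⊔ z = Y, and X ⊓ z ⋖ z by modularity
      have hsup : X ⊔ z = Y := by
        rcases hc.eq_or_eq (c := X ⊔ z) le_sup_left (sup_le hc.lt.le hzY.le) with h | h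
        · exact absurd (h ▸ le_sup_right) hzX
        · exact h
      have hcov : X ⊓ z ⋖ z := inf_covBy_of_covBy_sup_left (hsup ▸ hc)
      have hfinz : Order.height z < ⊤ := lt_top_iff_ne_top.mpr (hfin z)
      have hzn : Order.height z ≤ n := by
        have h := lt_of_lt_of_le (Order.height_strictMono hzY hfinz) hY
        push_cast at h
        exact (ENat.lt_add_one_iff (ENat.coe_ne_top n)).mp h
      have h1 : Order.height z ≤ Order.height (X ⊓ z) + 1 := ih (X ⊓ z) z hcov hzn
      have hXzX : X ⊓ z < X := by
        refine lt_of_le_of_ne inf_le_left fun h => ?_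
        have hXz : X ≤ z := h ▸ inf_le_right
        exact absurd (hsup ▸ sup_le hXz le_rfl : Y ≤ z) hzY.not_ge
      have h2 : Order.height (X ⊓ z) + 1 ≤ Order.height X := by
        have : Order.height (X ⊓ z) < Order.height X :=
          Order.height_strictMono hXzX (lt_top_iff_ne_top.mpr (hfin _))
        exact Order.add_one_le_of_lt this
      exact harith _ (h1.trans h2)

/-- In a modular lattice in which every element has finite height, joining an
admissible join-irreducible element `a` to `X` increases the height by exactly one. -/
theorem height_join_admissible {α : Type*} [Lattice α] [OrderBot α] [IsModularLattice α]
    (hfin : ∀ x : α, Order.height x ≠ ⊤)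
    (X a : α) (ha : JoinIrred a) (haX : ¬ a ≤ X)
    (hadm : ∀ a' : α, JoinIrred a' → a' < a → a' ≤ X) :
    Order.height (X ⊔ a) = Order.height X + 1 := by
  have hXlt : X < X ⊔ a := left_lt_sup.mpr haX
  have hcov : X ⋖ X ⊔ a := by
    refine ⟨hXlt, fun c hXc hclt => ?_⟩
    have hac : ¬ a ≤ c := fun h => hclt.not_ge (sup_le hXc.le h)
    have hd : c ⊓ a < a := lt_of_le_of_ne inf_le_right fun h => hac (h ▸ inf_le_left)
    have hdX : c ⊓ a ≤ X := by
      obtain ⟨m, hm⟩ := WithTop.ne_top_iff_exists.mp (hfin (c ⊓ a))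
      exact le_of_forall_joinIrred_le hfin m (c ⊓ a) X hm.ge
        fun a' ha' hle => hadm a' ha' (lt_of_le_of_lt hle hd)
    have hce : c = X ⊔ (a ⊓ c) := by
      have h1 : (X ⊔ a) ⊓ c = X ⊔ a ⊓ c := sup_inf_assoc_of_le a hXc.le
      have h2 : (X ⊔ a) ⊓ c = c := inf_eq_right.mpr hclt.le
      rw [← h1, h2]
    have hacX : a ⊓ c ≤ X := by rw [inf_comm]; exact hdX
    have : c ≤ X := by
      rw [hce]
      exact sup_le le_rfl hacX
    exact absurd this hXc.not_ge
  obtain ⟨m, hm⟩ := WithTop.ne_top_iff_exists.mp (hfin (X ⊔ a))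
  have hle : Order.height (X ⊔ a) ≤ Order.height X + 1 :=
    height_le_of_covBy hfin m X (X ⊔ a) hcov hm.ge
  have hge : Order.height X + 1 ≤ Order.height (X ⊔ a) := by
    have : Order.height X < Order.height (X ⊔ a) :=
      Order.height_strictMono hXlt (lt_top_iff_ne_top.mpr (hfin X))
    exact Order.add_one_le_of_lt this
  exact le_antisymm hle hge
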